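/- With the setup of the previous statement, the function Td(x,y) = lim_{t→∞} d(α(t), β(t))/t on X(∞) × X(∞) is a metric: it is nonnegative, symmetric, vanishes exactly when x = y, and satisfies the triangle inequality. -/

import Mathlib

/-- A constant-speed globally minimizing geodesic line. -/
def IsGeodesicLine {X : Type*} [MetricSpace X] (speed : ℝ) (γ : ℝ → X) : Prop :=
  ∀ s t : ℝ, dist (γ s) (γ t) = speed * |s - t|

/-- Busemann nonpositive curvature: distance between geodesics is convex. -/
def BusemannConvex (X : Type*) [MetricSpace X] : Prop :=
  ∀ (α β : ℝ → X) (a b : ℝ), IsGeodesicLine a α → IsGeodesicLine b β →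
    ConvexOn ℝ Set.univ (fun t => dist (α t) (β t))

/-- Uniquely geodesic metric space. -/
def UniquelyGeodesic (X : Type*) [MetricSpace X] : Prop :=
  ∀ x y : X, ∃! γ : ℝ → X, γ 0 = x ∧ γ 1 = y ∧ IsGeodesicLine (dist x y) γ

/-- A unit-speed geodesic ray, parameterized on [0,∞). -/
def IsGeodesicRay {X : Type*} [MetricSpace X] (γ : ℝ → X) : Prop :=
  ∀ s t : ℝ, 0 ≤ s → 0 ≤ t → dist (γ s) (γ t) = |s - t|

/-- A point metrically between the endpoints of a segment of a geodesic line lies on it. -/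
lemma between_on_line {X : Type*} [MetricSpace X]
    (huniq : UniquelyGeodesic X)
    (γ : ℝ → X) (hγ : IsGeodesicLine 1 γ) (S : ℝ) (hS : 0 < S)
    (y : X) (t : ℝ) (ht0 : 0 ≤ t) (htS : t ≤ S)
    (h1 : dist (γ 0) y = t) (h2 : dist y (γ S) = S - t) :
    y = γ t := by
  rcases eq_or_lt_of_le ht0 with rfl | ht0'
  · have : dist (γ 0) y = 0 := h1
    exact (dist_eq_zero.mp this).symm
  rcases eq_or_lt_of_le htS with rfl | htS'
  · have : dist y (γ t) = 0 := by rw [h2]; ring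
    exact dist_eq_zero.mp this
  obtain ⟨g1, ⟨hg10, hg11, hg1l⟩, -⟩ := huniq (γ 0) y
  obtain ⟨g2, ⟨hg20, hg21, hg2l⟩, -⟩ := huniq y (γ S)
  have htne : t ≠ 0 := ne_of_gt ht0'
  have hStne : S - t ≠ 0 := ne_of_gt (by linarith)
  have d1 : ∀ u v : ℝ, dist (g1 (u / t)) (g1 (v / t)) = |u - v| := by
    intro u v
    rw [hg1l, h1, div_sub_div_same, abs_div, abs_of_pos ht0']
    field_simp
  have d2 : ∀ u v : ℝ, dist (g2 ((u - t) / (S - t))) (g2 ((v - t) / (S - t))) = |u - v| := by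
    intro u v
    rw [hg2l, h2, div_sub_div_same, abs_div, abs_of_pos (by linarith : (0:ℝ) < S - t)]
    have : u - t - (v - t) = u - v := by ring
    rw [this]
    field_simp
  set σ : ℝ → X := fun u =>
    if u < 0 then γ u else if u ≤ t then g1 (u / t) else if u ≤ S then g2 ((u - t) / (S - t)) else γ u
    with hσdef
  have σB : ∀ u, 0 ≤ u → u ≤ t → σ u = g1 (u / t) := by
    intro u h h'; simp only [hσdef]; rw [if_neg (not_lt.mpr h), if_pos h']
  have σC : ∀ u, t < u → u ≤ S → σ u = g2 ((u - t) / (S - t)) := by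
    intro u h h'
    simp only [hσdef]
    rw [if_neg (not_lt.mpr (by linarith)), if_neg (not_le.mpr h), if_pos h']
  have σA : ∀ u, u < 0 → σ u = γ u := by
    intro u h; simp only [hσdef]; rw [if_pos h]
  have σD : ∀ u, S < u → σ u = γ u := by
    intro u h
    simp only [hσdef]
    rw [if_neg (not_lt.mpr (by linarith)), if_neg (not_le.mpr (by linarith)),
      if_neg (not_le.mpr h)]
  have σ0 : σ 0 = γ 0 := by rw [σB 0 le_rfl ht0'.le]; simpa using hg10
  have σt : σ t = y := by
    rw [σB t ht0 le_rfl, div_self htne]; exact hg11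
  have σS : σ S = γ S := by
    rw [σC S htS' le_rfl, div_self hStne]; exact hg21
  have hdxz : dist (γ 0) (γ S) = S := by
    rw [hγ 0 S]; rw [abs_of_nonpos (by linarith)]; ring
  -- distances from endpoints to σ v
  have A : ∀ v, 0 ≤ v → v ≤ S → dist (γ 0) (σ v) = v ∧ dist (σ v) (γ S) = S - v := by
    intro v hv0 hvS
    rcases le_or_gt v t with hvt | hvt
    · have hx : dist (γ 0) (σ v) = v := by
        rw [σB v hv0 hvt, ← hg10]
        have : g1 0 = g1 (0 / t) := by norm_num
        rw [this, d1, abs_of_nonpos (by linarith)]; ring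
      refine ⟨hx, le_antisymm ?_ ?_⟩
      · calc dist (σ v) (γ S) ≤ dist (σ v) y + dist y (γ S) := dist_triangle _ _ _
          _ = (t - v) + (S - t) := by
              rw [h2, ← σt, σB v hv0 hvt, σB t ht0 le_rfl, d1,
                abs_of_nonpos (by linarith)]; ring
          _ = S - v := by ring
      · have := dist_triangle (γ 0) (σ v) (γ S)
        rw [hdxz, hx] at this; linarith
    · have hz : dist (σ v) (γ S) = S - v := by
        rw [σC v hvt hvS, ← hg21]
        have : g2 1 = g2 ((S - t) / (S - t)) := by rw [div_self hStne]
        rw [this, d2, abs_of_nonpos (by linarith)]; ring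
      refine ⟨le_antisymm ?_ ?_, hz⟩
      · calc dist (γ 0) (σ v) ≤ dist (γ 0) y + dist y (σ v) := dist_triangle _ _ _
          _ = t + (v - t) := by
              rw [h1, ← σt, σC v hvt hvS, σB t ht0 le_rfl]
              have : g1 (t / t) = g2 ((t - t) / (S - t)) := by
                rw [div_self htne, hg11]
                have : ((t - t) / (S - t) : ℝ) = 0 := by simp
                rw [this, hg20]
              rw [this, d2, abs_of_nonpos (by linarith)]; ring
          _ = v := by ring
      · have := dist_triangle (γ 0) (σ v) (γ S)
        rw [hdxz, hz] at this; linarith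
  -- distance within [0, S]
  have M : ∀ u v, 0 ≤ u → u ≤ v → v ≤ S → dist (σ u) (σ v) = v - u := by
    intro u v hu huv hvS
    rcases le_or_gt v t with hvt | hvt
    · rw [σB u hu (le_trans huv hvt), σB v (le_trans hu huv) hvt, d1,
        abs_of_nonpos (by linarith)]; ring
    rcases le_or_gt u t with hut | hut
    · refine le_antisymm ?_ ?_
      · calc dist (σ u) (σ v) ≤ dist (σ u) y + dist y (σ v) := dist_triangle _ _ _
          _ = (t - u) + (v - t) := by
              rw [← σt, σB u hu hut, σB t ht0 le_rfl, σC v hvt hvS, d1]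
              have h2' : g1 (t / t) = g2 ((t - t) / (S - t)) := by
                rw [div_self htne, hg11]
                have : ((t - t) / (S - t) : ℝ) = 0 := by simp
                rw [this, hg20]
              rw [h2', d2, abs_of_nonpos (by linarith), abs_of_nonpos (by linarith)]
              ring
          _ = v - u := by ring
      · have h3 := dist_triangle (γ 0) (σ u) (σ v)
        have h4 := dist_triangle (γ 0) (σ v) (γ S)
        have h5 := dist_triangle (γ 0) (σ u) (γ S)
        have hAu := A u hu (le_trans huv hvS)
        have hAv := A v (le_trans hu huv) hvS
        have h6 := dist_triangle (γ 0) (σ u) (γ S)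
        have : dist (γ 0) (γ S) ≤ dist (γ 0) (σ u) + (dist (σ u) (σ v) + dist (σ v) (γ S)) :=
          le_trans (dist_triangle (γ 0) (σ u) (γ S))
            (by have := dist_triangle (σ u) (σ v) (γ S); linarith)
        rw [hdxz, hAu.1, hAv.2] at this; linarith
    · rw [σC u hut (le_trans huv hvS), σC v (lt_of_lt_of_le hut huv) hvS, d2,
        abs_of_nonpos (by linarith)]; ring
  -- σ is a unit-speed geodesic line
  have hline : IsGeodesicLine 1 σ := by
    have key : ∀ u v, u ≤ v → dist (σ u) (σ v) = v - u := by
      intro u v huv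
      rcases lt_or_ge u 0 with hu0 | hu0
      · rcases lt_or_ge v 0 with hv0 | hv0
        · rw [σA u hu0, σA v hv0, hγ, abs_of_nonpos (by linarith)]; ring
        rcases le_or_gt v S with hvS | hvS
        · have hAv := A v hv0 hvS
          refine le_antisymm ?_ ?_
          · calc dist (σ u) (σ v) ≤ dist (σ u) (γ 0) + dist (γ 0) (σ v) := dist_triangle _ _ _
              _ = (0 - u) + v := by
                  rw [σA u hu0, hAv.1, hγ, abs_of_nonpos (by linarith)]; ring
              _ = v - u := by ring
          · have : dist (γ u) (γ S) ≤ dist (σ u) (σ v) + dist (σ v) (γ S) := by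
              rw [← σA u hu0]; exact dist_triangle _ _ _
            rw [hγ u S, hAv.2, abs_of_nonpos (by linarith)] at this; linarith
        · rw [σA u hu0, σD v hvS, hγ, abs_of_nonpos (by linarith)]; ring
      rcases le_or_gt v S with hvS | hvS
      · exact M u v hu0 huv hvS
      rcases le_or_gt u S with huS | huS
      · have hAu := A u hu0 huS
        refine le_antisymm ?_ ?_
        · calc dist (σ u) (σ v) ≤ dist (σ u) (γ S) + dist (γ S) (σ v) := dist_triangle _ _ _
            _ = (S - u) + (v - S) := by
                rw [σD v hvS, hAu.2, hγ, abs_of_nonpos (by linarith)]; ring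
            _ = v - u := by ring
        · have : dist (γ 0) (γ v) ≤ dist (γ 0) (σ u) + dist (σ u) (σ v) := by
            rw [← σD v hvS]; exact dist_triangle _ _ _
          rw [hγ 0 v, hAu.1, abs_of_nonpos (by linarith)] at this; linarith
      · rw [σD u huS, σD v (by linarith), hγ, abs_of_nonpos (by linarith)]; ring
    intro s u
    rcases le_total s u with h | h
    · rw [key s u h, one_mul, abs_of_nonpos (by linarith)]; ring
    · rw [dist_comm, key u s h, one_mul, abs_of_nonneg (by linarith)]
  -- uniqueness
  obtain ⟨g, -, hgu⟩ := huniq (γ 0) (γ S)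
  have hSne : S ≠ 0 := ne_of_gt hS
  have hP : ∀ τ : ℝ → X, IsGeodesicLine 1 τ → τ 0 = γ 0 → τ S = γ S →
      (fun s : ℝ => τ (s * S)) = g := by
    intro τ hτ hτ0 hτS
    apply hgu
    refine ⟨by simpa using hτ0, by simpa using hτS, ?_⟩
    intro s u
    rw [hτ, hdxz, one_mul]
    rw [show s * S - u * S = (s - u) * S by ring, abs_mul, abs_of_pos hS]
    ring
  have e1 := hP σ hline σ0 σS
  have e2 := hP γ hγ rfl rfl
  have e3 : (fun s : ℝ => σ (s * S)) = fun s : ℝ => γ (s * S) := by rw [e1, e2]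
  have e4 := congrFun e3 (t / S)
  simp only [div_mul_cancel₀ _ hSne] at e4
  rw [σt] at e4
  exact e4

/-- The point at arclength `T` along the ray `α` equals the point at parameter
`T/S` on the unique geodesic line from `p` to `α S`, and monotone comparison. -/
lemma ray_chord {X : Type*} [MetricSpace X]
    (huniq : UniquelyGeodesic X) (hconv : BusemannConvex X)
    (p : X) (α β : ℝ → X) (hα : IsGeodesicRay α) (hβ : IsGeodesicRay β)
    (hpα : α 0 = p) (hpβ : β 0 = p)
    (T S : ℝ) (hT : 0 ≤ T) (hTS : T ≤ S) (hS : 0 < S) :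
    dist (α T) (β T) ≤ T / S * dist (α S) (β S) := by
  have hSne : S ≠ 0 := ne_of_gt hS
  have ray_on_line : ∀ γ : ℝ → X, IsGeodesicRay γ → γ 0 = p →
      ∃ g : ℝ → X, IsGeodesicLine S g ∧ g 0 = p ∧ g 1 = γ S ∧ γ T = g (T / S) := by
    intro γ hγ hpγ
    obtain ⟨g, ⟨hg0, hg1, hgl⟩, -⟩ := huniq p (γ S)
    have hdp : dist p (γ S) = S := by
      rw [← hpγ, hγ 0 S le_rfl hS.le, abs_of_nonpos (by linarith)]; ring
    have hgl' : IsGeodesicLine S g := by rwa [hdp] at hgl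
    refine ⟨g, hgl', hg0, hg1, ?_⟩
    -- the unit reparametrization of g
    have hunit : IsGeodesicLine 1 (fun u => g (u / S)) := by
      intro s u
      rw [hgl', div_sub_div_same, abs_div, abs_of_pos hS, one_mul]
      field_simp
    have h0 : (fun u => g (u / S)) 0 = p := by simpa using hg0
    have hSv : (fun u => g (u / S)) S = γ S := by
      simp only [div_self hSne]; exact hg1
    have := between_on_line huniq (fun u => g (u / S)) hunit S hS (γ T) T hT hTS
      (by rw [show g (0 / S) = p from h0, ← hpγ, hγ 0 T le_rfl hT, abs_of_nonpos (by linarith)]; ring)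
      (by rw [show g (S / S) = γ S from hSv, hγ T S hT hS.le, abs_of_nonpos (by linarith)]; ring)
    exact this
  obtain ⟨gα, hgαl, hgα0, hgα1, hgαT⟩ := ray_on_line α hα hpα
  obtain ⟨gβ, hgβl, hgβ0, hgβ1, hgβT⟩ := ray_on_line β hβ hpβ
  have hcv := hconv gα gβ S S hgαl hgβl
  have hab : (1 - T / S) + T / S = 1 := by ring
  have ha : (0:ℝ) ≤ 1 - T / S := by
    have : T / S ≤ 1 := (div_le_one hS).mpr hTS
    linarith
  have hb : (0:ℝ) ≤ T / S := div_nonneg hT hS.le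
  have := hcv.2 (Set.mem_univ (0:ℝ)) (Set.mem_univ (1:ℝ)) ha hb hab
  simp only [smul_eq_mul, mul_zero, mul_one, zero_add] at this
  rw [hgα0, hgβ0, dist_self, mul_zero, zero_add] at this
  rw [hgαT, hgβT, hgα1, hgβ1] at *
  exact this

/-- The Tits distance Td on the sphere at infinity, computed via
rays from a fixed base point p, is a metric: nonnegative, symmetric, vanishing
exactly for equal ideal points (equal rays from p), and satisfying the triangle
inequality. -/
theorem tits_distance_is_metric
    {X : Type*} [MetricSpace X] [CompleteSpace X] [SimplyConnectedSpace X]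
    (huniq : UniquelyGeodesic X) (hconv : BusemannConvex X)
    (p : X) (α β δ : ℝ → X)
    (hα : IsGeodesicRay α) (hβ : IsGeodesicRay β) (hδ : IsGeodesicRay δ)
    (hpα : α 0 = p) (hpβ : β 0 = p) (hpδ : δ 0 = p)
    (Lαβ Lβα Lαδ Lβδ : ℝ)
    (hαβ : Filter.Tendsto (fun t => dist (α t) (β t) / t) Filter.atTop (nhds Lαβ))
    (hβα : Filter.Tendsto (fun t => dist (β t) (α t) / t) Filter.atTop (nhds Lβα))
    (hαδ : Filter.Tendsto (fun t => dist (α t) (δ t) / t) Filter.atTop (nhds Lαδ))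
    (hβδ : Filter.Tendsto (fun t => dist (β t) (δ t) / t) Filter.atTop (nhds Lβδ)) :
    0 ≤ Lαβ ∧ Lαβ = Lβα ∧ (Lαβ = 0 ↔ ∀ t : ℝ, 0 ≤ t → α t = β t) ∧
      Lαδ ≤ Lαβ + Lβδ := by
  refine ⟨?_, ?_, ⟨?_, ?_⟩, ?_⟩
  · -- nonnegativity
    refine ge_of_tendsto hαβ ?_
    filter_upwards [Filter.eventually_ge_atTop (0:ℝ)] with t ht
    exact div_nonneg dist_nonneg ht
  · -- symmetry
    refine tendsto_nhds_unique hαβ ?_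
    simpa [dist_comm] using hβα
  · -- Lαβ = 0 → rays equal
    intro h0 t ht
    rcases eq_or_lt_of_le ht with rfl | ht'
    · rw [hpα, hpβ]
    have key : ∀ S, t ≤ S → dist (α t) (β t) ≤ t * (dist (α S) (β S) / S) := by
      intro S hS
      have hS' : 0 < S := lt_of_lt_of_le ht' hS
      have := ray_chord huniq hconv p α β hα hβ hpα hpβ t S ht hS hS'
      calc dist (α t) (β t) ≤ t / S * dist (α S) (β S) := this
        _ = t * (dist (α S) (β S) / S) := by ring
    have lim : Filter.Tendsto (fun S => t * (dist (α S) (β S) / S)) Filter.atTop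
        (nhds (t * Lαβ)) := hαβ.const_mul t
    have hle : dist (α t) (β t) ≤ t * Lαβ := by
      refine ge_of_tendsto lim ?_
      filter_upwards [Filter.eventually_ge_atTop t] with S hS
      exact key S hS
    rw [h0, mul_zero] at hle
    exact dist_le_zero.mp hle
  · -- rays equal → Lαβ = 0
    intro h
    refine tendsto_nhds_unique hαβ ?_
    have : (fun t => dist (α t) (β t) / t) =ᶠ[Filter.atTop] fun _ => (0:ℝ) := by
      filter_upwards [Filter.eventually_ge_atTop (0:ℝ)] with t ht
      rw [h t ht, dist_self, zero_div]
    exact (Filter.tendsto_congr' this).mpr tendsto_const_nhds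
  · -- triangle inequality
    refine le_of_tendsto_of_tendsto hαδ (hαβ.add hβδ) ?_
    filter_upwards [Filter.eventually_gt_atTop (0:ℝ)] with t ht
    have htri := dist_triangle (α t) (β t) (δ t)
    calc dist (α t) (δ t) / t ≤ (dist (α t) (β t) + dist (β t) (δ t)) / t := by
          gcongr
      _ = dist (α t) (β t) / t + dist (β t) (δ t) / t := add_div _ _ _
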